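/- Let f: ℝ^{n} → ℝ be given by f(δ) = Σ_{i=r+1}^n (λδᵢ^p + (1/2)(δᵢ − σᵢ)²) with δᵢ ≥ 0, where each scalar subproblem min_{x≥0} λx^p + (1/2)(x−σᵢ)² has minimizer δᵢ* given by GST. If σ_{r+1} ≥ ... ≥ σₙ ≥ 0, then the vector (δ_{r+1}*, ..., δₙ*) satisfies the ordering constraint δᵢ* ≥ δⱼ* for all i ≤ j, and hence is the global minimizer of f subject to the monotonicity constraints δ_{r+1} ≥ ... ≥ δₙ. -/

import Mathlib

private lemma gst_mono (p l : ℝ) (hp : 0 < p) (hp1 : p < 1) (hl : 0 < l) :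
    StrictMonoOn (fun x : ℝ => x + l * p * x ^ (p - 1))
      (Set.Ici ((2 * l * (1 - p)) ^ ((1 : ℝ) / (2 - p)))) := by
  set t : ℝ := (2 * l * (1 - p)) ^ ((1 : ℝ) / (2 - p)) with ht_def
  have hbase : (0 : ℝ) < 2 * l * (1 - p) := by nlinarith
  have ht : 0 < t := Real.rpow_pos_of_pos hbase _
  apply strictMonoOn_of_deriv_pos (convex_Ici t)
  · intro x hx
    have hx0 : x ≠ 0 := by
      have : t ≤ x := hx
      exact (lt_of_lt_of_le ht this).ne'
    exact ((continuousAt_id.add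
      (((Real.continuousAt_rpow_const x (p - 1) (Or.inl hx0)).const_mul
        (l * p))))).continuousWithinAt
  · intro x hx
    rw [interior_Ici] at hx
    have hx0 : 0 < x := lt_trans ht hx
    have hd : HasDerivAt (fun x : ℝ => x + l * p * x ^ (p - 1))
        (1 + l * p * ((p - 1) * x ^ (p - 1 - 1))) x := by
      exact (hasDerivAt_id x).add
        ((Real.hasDerivAt_rpow_const (Or.inl hx0.ne')).const_mul (l * p))
    rw [hd.deriv]
    have h1 : x ^ (p - 1 - 1) * x ^ (2 - p) = 1 := by
      rw [← Real.rpow_add hx0, show p - 1 - 1 + (2 - p) = 0 by ring, Real.rpow_zero]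
    have h2 : 2 * l * (1 - p) < x ^ (2 - p) := by
      have := Real.rpow_lt_rpow (le_of_lt ht) hx (by linarith : (0:ℝ) < 2 - p)
      rwa [ht_def, ← Real.rpow_mul (le_of_lt hbase), one_div,
        inv_mul_cancel₀ (by linarith : (2:ℝ) - p ≠ 0), Real.rpow_one] at this
    have h3 : 0 < x ^ (p - 1 - 1) := Real.rpow_pos_of_pos hx0 _
    have h4 : 0 < x ^ (2 - p) := Real.rpow_pos_of_pos hx0 _
    have hlt : l * p * (1 - p) < x ^ (2 - p) := by nlinarith
    have hm : l * p * (1 - p) * x ^ (p - 1 - 1) * x ^ (2 - p) < 1 * x ^ (2 - p) := by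
      rw [mul_assoc, h1, mul_one, one_mul]; exact hlt
    have key := (mul_lt_mul_iff_of_pos_right h4).mp hm
    nlinarith [key]

open Classical in
/-- (Theorem 2 of the paper.) Let `σ_{r+1} ≥ ⋯ ≥ σₙ ≥ 0` and let each `δᵢ`
(for `i > r`) be the GST solution of the scalar subproblem
`min_{x ≥ 0} λ x^p + (1/2)(x - σᵢ)²`, i.e. `δᵢ = 0` if `σᵢ ≤ τ` and otherwise
`δᵢ` is the root of `x + λ p x^(p-1) = σᵢ` beyond `(2λ(1-p))^(1/(2-p))`.
Then the `δᵢ` satisfy the ordering constraints `δᵢ ≥ δⱼ` for `i ≤ j`, and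
`δ` is a global minimizer of `f δ' = ∑_{i>r} (λ δ'ᵢ^p + (1/2)(δ'ᵢ - σᵢ)²)`
subject to nonnegativity and monotonicity. -/
theorem stmt_16 (n r : ℕ) (p l : ℝ) (hp : 0 < p) (hp1 : p < 1) (hl : 0 < l)
    (σ : Fin n → ℝ) (hσ0 : ∀ i, 0 ≤ σ i)
    (hσord : ∀ i j : Fin n, r ≤ (i : ℕ) → i ≤ j → σ j ≤ σ i)
    (δ : Fin n → ℝ)
    (hgst : ∀ i : Fin n, r ≤ (i : ℕ) →
      if σ i ≤ (2 * l * (1 - p)) ^ ((1 : ℝ) / (2 - p)) +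
          l * p * (2 * l * (1 - p)) ^ ((p - 1) / (2 - p)) then δ i = 0
      else (2 * l * (1 - p)) ^ ((1 : ℝ) / (2 - p)) < δ i ∧
        δ i + l * p * δ i ^ (p - 1) = σ i)
    (hscalar : ∀ i : Fin n, r ≤ (i : ℕ) → ∀ x : ℝ, 0 ≤ x →
      l * δ i ^ p + (1 / 2) * (δ i - σ i) ^ 2 ≤
        l * x ^ p + (1 / 2) * (x - σ i) ^ 2) :
    (∀ i j : Fin n, r ≤ (i : ℕ) → i ≤ j → δ j ≤ δ i) ∧
    (∀ δ' : Fin n → ℝ, (∀ i, 0 ≤ δ' i) →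
      (∀ i j : Fin n, r ≤ (i : ℕ) → i ≤ j → δ' j ≤ δ' i) →
      ∑ i ∈ Finset.univ.filter (fun i : Fin n => r ≤ (i : ℕ)),
          (l * δ i ^ p + (1 / 2) * (δ i - σ i) ^ 2) ≤
        ∑ i ∈ Finset.univ.filter (fun i : Fin n => r ≤ (i : ℕ)),
          (l * δ' i ^ p + (1 / 2) * (δ' i - σ i) ^ 2)) := by
  set t : ℝ := (2 * l * (1 - p)) ^ ((1 : ℝ) / (2 - p)) with ht_def
  have hbase : (0 : ℝ) < 2 * l * (1 - p) := by nlinarith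
  have ht : 0 < t := Real.rpow_pos_of_pos hbase _
  set τ : ℝ := t + l * p * (2 * l * (1 - p)) ^ ((p - 1) / (2 - p)) with hτ_def
  constructor
  · intro i j hi hij
    have hij' : (i : ℕ) ≤ (j : ℕ) := hij
    have hj : r ≤ (j : ℕ) := le_trans hi hij'
    have hσ := hσord i j hi hij
    have Hi := hgst i hi
    have Hj := hgst j hj
    by_cases hc : σ j ≤ τ
    · rw [if_pos hc] at Hj
      rw [Hj]
      by_cases hc' : σ i ≤ τ
      · rw [if_pos hc'] at Hi; rw [Hi]
      · rw [if_neg hc'] at Hi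
        exact le_of_lt (lt_trans ht Hi.1)
    · have hc' : ¬ σ i ≤ τ := fun h => hc (le_trans hσ h)
      rw [if_neg hc] at Hj
      rw [if_neg hc'] at Hi
      by_contra h
      push_neg at h
      have := gst_mono p l hp hp1 hl (le_of_lt Hi.1) (le_of_lt Hj.1) h
      simp only [Hi.2, Hj.2] at this
      linarith
  · intro δ' h0 _
    apply Finset.sum_le_sum
    intro i hi
    exact hscalar i (Finset.mem_filter.mp hi).2 (δ' i) (h0 i)
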